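/- arXiv:2502.19334 — 5 statements merged into one kernel-verified Lean document; each statement's English description precedes it below -/
import Mathlib

section
/- Let n1 ≥ 1 and n2 ≥ 1, let C1 : Fin n1 → Fin n1 → ℝ satisfy C1 x x = 0 for all x, let C2 : Fin n2 → Fin n2 → ℝ satisfy C2 y y = 0 for all y, and let S : Fin n1 → Fin n2 → ℝ satisfy S x y > 0 for all x, y. If ∑_{x1,x2 ∈ Fin n1} ∑_{y1,y2 ∈ Fin n2} (C1 x1 x2 − C2 y1 y2)² · S x1 y1 · S x2 y2 = 0, then C1 x1 x2 = 0 for all x1, x2 and C2 y1 y2 = 0 for all y1, y2. -/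
theorem gw_term_zero_collapse (n1 n2 : ℕ) (hn1 : 1 ≤ n1) (hn2 : 1 ≤ n2)
    (C1 : Fin n1 → Fin n1 → ℝ) (C2 : Fin n2 → Fin n2 → ℝ)
    (hC1 : ∀ x, C1 x x = 0) (hC2 : ∀ y, C2 y y = 0)
    (S : Fin n1 → Fin n2 → ℝ) (hS : ∀ x y, S x y > 0)
    (hzero : (∑ x1 : Fin n1, ∑ x2 : Fin n1, ∑ y1 : Fin n2, ∑ y2 : Fin n2,
        (C1 x1 x2 - C2 y1 y2) ^ 2 * S x1 y1 * S x2 y2) = 0) :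
    (∀ x1 x2, C1 x1 x2 = 0) ∧ (∀ y1 y2, C2 y1 y2 = 0) := by
  have tnn : ∀ (x1 x2 : Fin n1) (y1 y2 : Fin n2),
      0 ≤ (C1 x1 x2 - C2 y1 y2) ^ 2 * S x1 y1 * S x2 y2 := fun x1 x2 y1 y2 =>
    mul_nonneg (mul_nonneg (sq_nonneg _) (hS _ _).le) (hS _ _).le
  have h1 := (Finset.sum_eq_zero_iff_of_nonneg (fun x1 _ =>
    Finset.sum_nonneg fun x2 _ => Finset.sum_nonneg fun y1 _ =>
      Finset.sum_nonneg fun y2 _ => tnn x1 x2 y1 y2)).mp hzero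
  have key : ∀ (x1 x2 : Fin n1) (y1 y2 : Fin n2),
      (C1 x1 x2 - C2 y1 y2) ^ 2 * S x1 y1 * S x2 y2 = 0 := by
    intro x1 x2 y1 y2
    have h2 := (Finset.sum_eq_zero_iff_of_nonneg (fun x2 _ =>
      Finset.sum_nonneg fun y1 _ => Finset.sum_nonneg fun y2 _ => tnn x1 x2 y1 y2)).mp
      (h1 x1 (Finset.mem_univ _)) x2 (Finset.mem_univ _)
    have h3 := (Finset.sum_eq_zero_iff_of_nonneg (fun y1 _ =>
      Finset.sum_nonneg fun y2 _ => tnn x1 x2 y1 y2)).mp h2 y1 (Finset.mem_univ _)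
    exact (Finset.sum_eq_zero_iff_of_nonneg (fun y2 _ => tnn x1 x2 y1 y2)).mp h3 y2
      (Finset.mem_univ _)
  have eqCC : ∀ (x1 x2 : Fin n1) (y1 y2 : Fin n2), C1 x1 x2 = C2 y1 y2 := by
    intro x1 x2 y1 y2
    have h := key x1 x2 y1 y2
    have hS1 := hS x1 y1
    have hS2 := hS x2 y2
    have : (C1 x1 x2 - C2 y1 y2) ^ 2 = 0 := by
      rcases mul_eq_zero.mp h with h' | h'
      · rcases mul_eq_zero.mp h' with h'' | h''
        · exact h''
        · exact absurd h'' hS1.ne'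
      · exact absurd h' hS2.ne'
    have := pow_eq_zero_iff (n := 2) (by norm_num) |>.mp this
    linarith
  let y0 : Fin n2 := ⟨0, hn2⟩
  let x0 : Fin n1 := ⟨0, hn1⟩
  constructor
  · intro x1 x2
    have := eqCC x1 x2 y0 y0
    rw [hC2 y0] at this
    exact this
  · intro y1 y2
    have := (eqCC x0 x0 y1 y2).symm
    rw [hC1 x0] at this
    exact this
end

section
/- Let n1, n2, d be positive integers, let E1 : Fin n1 → EuclideanSpace ℝ (Fin d) and E2 : Fin n2 → EuclideanSpace ℝ (Fin d) be node embeddings, and define the cost matrices M x y = ‖E1 x − E2 y‖², C1 x x' = ‖E1 x − E1 x'‖², C2 y y' = ‖E2 y − E2 y'‖². Let S : Fin n1 → Fin n2 → ℝ satisfy S x y > 0 for all x, y, and let α ∈ ℝ with 0 < α < 1. Then (1−α)·∑_{x,y} M x y · S x y + α·∑_{x,x',y,y'} (C1 x x' − C2 y y')² · S x y · S x' y' = 0 if and only if E1 x = E2 y for all x ∈ Fin n1 and y ∈ Fin n2 (embedding collapse). -/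
theorem fgw_zero_iff_embedding_collapse (n1 n2 d : ℕ)
    (hn1 : 0 < n1) (hn2 : 0 < n2) (hd : 0 < d)
    (E1 : Fin n1 → EuclideanSpace ℝ (Fin d)) (E2 : Fin n2 → EuclideanSpace ℝ (Fin d))
    (M : Fin n1 → Fin n2 → ℝ) (hM : ∀ x y, M x y = ‖E1 x - E2 y‖ ^ 2)
    (C1 : Fin n1 → Fin n1 → ℝ) (hC1 : ∀ x x', C1 x x' = ‖E1 x - E1 x'‖ ^ 2)
    (C2 : Fin n2 → Fin n2 → ℝ) (hC2 : ∀ y y', C2 y y' = ‖E2 y - E2 y'‖ ^ 2)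
    (S : Fin n1 → Fin n2 → ℝ) (hS : ∀ x y, S x y > 0)
    (α : ℝ) (hα0 : 0 < α) (hα1 : α < 1) :
    (1 - α) * (∑ x : Fin n1, ∑ y : Fin n2, M x y * S x y) +
        α * (∑ x : Fin n1, ∑ x' : Fin n1, ∑ y : Fin n2, ∑ y' : Fin n2,
          (C1 x x' - C2 y y') ^ 2 * S x y * S x' y') = 0 ↔
      ∀ x y, E1 x = E2 y := by
  have hterm : ∀ x y, 0 ≤ M x y * S x y := by
    intro x y
    exact mul_nonneg (by rw [hM]; positivity) (le_of_lt (hS x y))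
  have hA : 0 ≤ ∑ x : Fin n1, ∑ y : Fin n2, M x y * S x y :=
    Finset.sum_nonneg fun x _ => Finset.sum_nonneg fun y _ => hterm x y
  have hB : 0 ≤ ∑ x : Fin n1, ∑ x' : Fin n1, ∑ y : Fin n2, ∑ y' : Fin n2,
      (C1 x x' - C2 y y') ^ 2 * S x y * S x' y' := by
    apply Finset.sum_nonneg; intro x _
    apply Finset.sum_nonneg; intro x' _
    apply Finset.sum_nonneg; intro y _
    apply Finset.sum_nonneg; intro y' _
    have := hS x y; have := hS x' y'; positivity
  constructor
  · intro h x y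
    have h1 : (1 - α) * (∑ x : Fin n1, ∑ y : Fin n2, M x y * S x y) = 0 := by
      nlinarith [mul_nonneg (le_of_lt hα0) hB, mul_nonneg (by linarith : (0:ℝ) ≤ 1 - α) hA]
    have h2 : (∑ x : Fin n1, ∑ y : Fin n2, M x y * S x y) = 0 := by
      rcases mul_eq_zero.1 h1 with h | h
      · linarith
      · exact h
    have h3 : ∀ x ∈ Finset.univ, (∑ y : Fin n2, M x y * S x y) = 0 := by
      rw [← Finset.sum_eq_zero_iff_of_nonneg
        (fun x _ => Finset.sum_nonneg fun y _ => hterm x y)]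
      exact h2
    have h4 : M x y * S x y = 0 := by
      have := (Finset.sum_eq_zero_iff_of_nonneg (fun y _ => hterm x y)).1
        (h3 x (Finset.mem_univ x)) y (Finset.mem_univ y)
      exact this
    have h5 : M x y = 0 := by
      rcases mul_eq_zero.1 h4 with h | h
      · exact h
      · exact absurd h (ne_of_gt (hS x y))
    rw [hM] at h5
    have : ‖E1 x - E2 y‖ = 0 := by nlinarith [norm_nonneg (E1 x - E2 y)]
    exact sub_eq_zero.1 (norm_eq_zero.1 this)
  · intro h
    have hM0 : ∀ x y, M x y = 0 := by
      intro x y; rw [hM, h x y, sub_self, norm_zero]; ring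
    have hC : ∀ x x' y y', C1 x x' - C2 y y' = 0 := by
      intro x x' y y'
      rw [hC1, hC2, h x y, h x' y', sub_self]
    simp only [hM0, hC]
    simp
end

section
/- Let n1, n2 be positive integers, M : Fin n1 → Fin n2 → ℝ, C1 : Fin n1 → Fin n1 → ℝ, C2 : Fin n2 → Fin n2 → ℝ, S : Fin n1 → Fin n2 → ℝ, and α ∈ ℝ with α > 0. With K1 = ∑_{x,y} M x y, K2 = ∑_{x,x',y,y'} (C1 x x' − C2 y y')²·(S x y + S x' y'), K3 = ∑_{x,x',y,y'} (C1 x x' − C2 y y')², assume K3 > 0 and set λ* = ((1−α)·K1 + α·K2) / (2·α·K3). Then for every λ ∈ ℝ, J(λ) ≥ J(λ*), with equality if and only if λ = λ*, where J(λ) = (1−α)·∑_{x,y} M x y · (S x y − λ) + α·∑_{x,x',y,y'} (C1 x x' − C2 y y')² · (S x y − λ)·(S x' y' − λ). -/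
theorem closed_form_lambda_is_unique_minimizer (n1 n2 : ℕ) (hn1 : 0 < n1) (hn2 : 0 < n2)
    (M : Fin n1 → Fin n2 → ℝ) (C1 : Fin n1 → Fin n1 → ℝ) (C2 : Fin n2 → Fin n2 → ℝ)
    (S : Fin n1 → Fin n2 → ℝ) (α : ℝ) (hα : α > 0)
    (K1 K2 K3 : ℝ)
    (hK1 : K1 = ∑ x : Fin n1, ∑ y : Fin n2, M x y)
    (hK2 : K2 = ∑ x : Fin n1, ∑ x' : Fin n1, ∑ y : Fin n2, ∑ y' : Fin n2,
      (C1 x x' - C2 y y') ^ 2 * (S x y + S x' y'))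
    (hK3 : K3 = ∑ x : Fin n1, ∑ x' : Fin n1, ∑ y : Fin n2, ∑ y' : Fin n2,
      (C1 x x' - C2 y y') ^ 2)
    (hK3pos : K3 > 0)
    (lamStar : ℝ) (hlamStar : lamStar = ((1 - α) * K1 + α * K2) / (2 * α * K3))
    (J : ℝ → ℝ)
    (hJ : ∀ lam : ℝ, J lam =
      (1 - α) * (∑ x : Fin n1, ∑ y : Fin n2, M x y * (S x y - lam)) +
        α * (∑ x : Fin n1, ∑ x' : Fin n1, ∑ y : Fin n2, ∑ y' : Fin n2,
          (C1 x x' - C2 y y') ^ 2 * (S x y - lam) * (S x' y' - lam))) :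
    ∀ lam : ℝ, J lam ≥ J lamStar ∧ (J lam = J lamStar ↔ lam = lamStar) := by
  have h1 : ∀ lam : ℝ, (∑ x : Fin n1, ∑ y : Fin n2, M x y * (S x y - lam))
      = (∑ x : Fin n1, ∑ y : Fin n2, M x y * S x y) - K1 * lam := by
    intro lam
    rw [hK1, Finset.sum_mul, ← Finset.sum_sub_distrib]
    refine Finset.sum_congr rfl fun x _ => ?_
    rw [Finset.sum_mul, ← Finset.sum_sub_distrib]
    refine Finset.sum_congr rfl fun y _ => ?_
    ring
  have h2 : ∀ lam : ℝ, (∑ x : Fin n1, ∑ x' : Fin n1, ∑ y : Fin n2, ∑ y' : Fin n2,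
        (C1 x x' - C2 y y') ^ 2 * (S x y - lam) * (S x' y' - lam))
      = (∑ x : Fin n1, ∑ x' : Fin n1, ∑ y : Fin n2, ∑ y' : Fin n2,
        (C1 x x' - C2 y y') ^ 2 * S x y * S x' y') - K2 * lam + K3 * lam ^ 2 := by
    intro lam
    rw [hK2, hK3, Finset.sum_mul, Finset.sum_mul, ← Finset.sum_sub_distrib,
      ← Finset.sum_add_distrib]
    refine Finset.sum_congr rfl fun x _ => ?_
    rw [Finset.sum_mul, Finset.sum_mul, ← Finset.sum_sub_distrib, ← Finset.sum_add_distrib]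
    refine Finset.sum_congr rfl fun x' _ => ?_
    rw [Finset.sum_mul, Finset.sum_mul, ← Finset.sum_sub_distrib, ← Finset.sum_add_distrib]
    refine Finset.sum_congr rfl fun y _ => ?_
    rw [Finset.sum_mul, Finset.sum_mul, ← Finset.sum_sub_distrib, ← Finset.sum_add_distrib]
    refine Finset.sum_congr rfl fun y' _ => ?_
    ring
  have key : ∀ lam : ℝ, J lam - J lamStar = α * K3 * (lam - lamStar) ^ 2 := by
    intro lam
    have e1 := hJ lam
    have e2 := hJ lamStar
    rw [h1, h2] at e1 e2
    have hden : 2 * α * K3 ≠ 0 := by positivity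
    have hls : lamStar * (2 * α * K3) = (1 - α) * K1 + α * K2 := by
      rw [hlamStar]; field_simp
    rw [e1, e2]
    linear_combination (lam - lamStar) * hls
  intro lam
  have hk := key lam
  have hpos : 0 < α * K3 := by positivity
  constructor
  · nlinarith [sq_nonneg (lam - lamStar)]
  · constructor
    · intro h
      have : (lam - lamStar) ^ 2 = 0 := by
        have := hk
        rw [h] at this
        have h0 : α * K3 * (lam - lamStar) ^ 2 = 0 := by linarith
        have := (mul_eq_zero.mp h0).resolve_left (ne_of_gt hpos)
        exact this
      have := pow_eq_zero_iff (n := 2) (by norm_num) |>.mp this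
      linarith
    · intro h; rw [h]
end

section
/- Let n1, n2 be positive integers, M : Fin n1 → Fin n2 → ℝ with M x y ≥ 0 for all x, y, C1 : Fin n1 → Fin n1 → ℝ, C2 : Fin n2 → Fin n2 → ℝ, S : Fin n1 → Fin n2 → ℝ with S x y ≥ 0 for all x, y, and α ∈ ℝ with 0 < α ≤ 1. With K1 = ∑_{x,y} M x y, K2 = ∑_{x,x',y,y'} (C1 x x' − C2 y y')²·(S x y + S x' y'), K3 = ∑_{x,x',y,y'} (C1 x x' − C2 y y')², assume K3 > 0. Then for every λ ∈ ℝ, J(λ) ≥ −((1−α)·K1 + α·K2)² / (4·α·K3), where J(λ) = (1−α)·∑_{x,y} M x y · (S x y − λ) + α·∑_{x,x',y,y'} (C1 x x' − C2 y y')² · (S x y − λ)·(S x' y' − λ). -/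
theorem objective_lower_bound (n1 n2 : ℕ) (hn1 : 0 < n1) (hn2 : 0 < n2)
    (M : Fin n1 → Fin n2 → ℝ) (hM : ∀ x y, M x y ≥ 0)
    (C1 : Fin n1 → Fin n1 → ℝ) (C2 : Fin n2 → Fin n2 → ℝ)
    (S : Fin n1 → Fin n2 → ℝ) (hS : ∀ x y, S x y ≥ 0)
    (α : ℝ) (hα0 : 0 < α) (hα1 : α ≤ 1)
    (K1 K2 K3 : ℝ)
    (hK1 : K1 = ∑ x : Fin n1, ∑ y : Fin n2, M x y)
    (hK2 : K2 = ∑ x : Fin n1, ∑ x' : Fin n1, ∑ y : Fin n2, ∑ y' : Fin n2,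
      (C1 x x' - C2 y y') ^ 2 * (S x y + S x' y'))
    (hK3 : K3 = ∑ x : Fin n1, ∑ x' : Fin n1, ∑ y : Fin n2, ∑ y' : Fin n2,
      (C1 x x' - C2 y y') ^ 2)
    (hK3pos : K3 > 0)
    (J : ℝ → ℝ)
    (hJ : ∀ lam : ℝ, J lam =
      (1 - α) * (∑ x : Fin n1, ∑ y : Fin n2, M x y * (S x y - lam)) +
        α * (∑ x : Fin n1, ∑ x' : Fin n1, ∑ y : Fin n2, ∑ y' : Fin n2,
          (C1 x x' - C2 y y') ^ 2 * (S x y - lam) * (S x' y' - lam))) :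
    ∀ lam : ℝ, J lam ≥ -(((1 - α) * K1 + α * K2) ^ 2) / (4 * α * K3) := by
  intro lam
  set A : ℝ := ∑ x : Fin n1, ∑ y : Fin n2, M x y * S x y with hA
  set Q : ℝ := ∑ x : Fin n1, ∑ x' : Fin n1, ∑ y : Fin n2, ∑ y' : Fin n2,
      (C1 x x' - C2 y y') ^ 2 * S x y * S x' y' with hQ
  have hApos : 0 ≤ A := by
    apply Finset.sum_nonneg; intro x _
    apply Finset.sum_nonneg; intro y _
    exact mul_nonneg (hM x y) (hS x y)
  have hQpos : 0 ≤ Q := by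
    apply Finset.sum_nonneg; intro x _
    apply Finset.sum_nonneg; intro x' _
    apply Finset.sum_nonneg; intro y _
    apply Finset.sum_nonneg; intro y' _
    exact mul_nonneg (mul_nonneg (sq_nonneg _) (hS x y)) (hS x' y')
  have e1 : ∑ x : Fin n1, ∑ y : Fin n2, M x y * (S x y - lam)
      = A - K1 * lam := by
    rw [hK1, hA]
    simp only [mul_sub, Finset.sum_sub_distrib, Finset.sum_mul]
  have e2 : (∑ x : Fin n1, ∑ x' : Fin n1, ∑ y : Fin n2, ∑ y' : Fin n2,
        (C1 x x' - C2 y y') ^ 2 * (S x y - lam) * (S x' y' - lam))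
      = Q - K2 * lam + K3 * lam ^ 2 := by
    rw [hK2, hK3, hQ]
    simp only [show ∀ w s t : ℝ, w * (s - lam) * (t - lam)
        = w * s * t - w * (s + t) * lam + w * lam ^ 2 from fun w s t => by ring,
      Finset.sum_add_distrib, Finset.sum_sub_distrib, Finset.sum_mul]
  have hJl : J lam = ((1 - α) * A + α * Q)
      - ((1 - α) * K1 + α * K2) * lam + α * K3 * lam ^ 2 := by
    rw [hJ, e1, e2]; ring
  have hC0 : 0 ≤ (1 - α) * A + α * Q :=
    add_nonneg (mul_nonneg (by linarith) hApos) (mul_nonneg hα0.le hQpos)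
  have hc : (0:ℝ) < 4 * α * K3 := by positivity
  rw [ge_iff_le, div_le_iff₀ hc]
  nlinarith [sq_nonneg (2 * α * K3 * lam - ((1 - α) * K1 + α * K2)),
    mul_nonneg (mul_nonneg (by linarith : (0:ℝ) ≤ 4 * α) hK3pos.le) hC0]
end

section
/- Let n1 and n2 be positive integers, C1 : Matrix (Fin n1) (Fin n1) ℝ, C2 : Matrix (Fin n2) (Fin n2) ℝ, and T : Matrix (Fin n1) (Fin n2) ℝ. Then ∑_{x,x' ∈ Fin n1} ∑_{y,y' ∈ Fin n2} (C1 x x' − C2 y y')² · T x y · T x' y' = ∑_{x,y} L x y · T x y, where L = (C1 ⊙ C1) * T * 1_{n2×n2} + 1_{n1×n1} * T * (C2 ⊙ C2)ᵀ − 2 • (C1 * T * C2ᵀ), with ⊙ denoting the entrywise (Hadamard) product, * matrix multiplication, 1_{n×m} the all-ones matrix, and ᵀ the transpose. -/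
open Matrix in
theorem gw_quadratic_form_decomposition (n1 n2 : ℕ) (hn1 : 0 < n1) (hn2 : 0 < n2)
    (C1 : Matrix (Fin n1) (Fin n1) ℝ) (C2 : Matrix (Fin n2) (Fin n2) ℝ)
    (T : Matrix (Fin n1) (Fin n2) ℝ)
    (ones1 : Matrix (Fin n1) (Fin n1) ℝ) (hones1 : ∀ i j, ones1 i j = 1)
    (ones2 : Matrix (Fin n2) (Fin n2) ℝ) (hones2 : ∀ i j, ones2 i j = 1)
    (L : Matrix (Fin n1) (Fin n2) ℝ)
    (hL : L = Matrix.hadamard C1 C1 * T * ones2 + ones1 * T * (Matrix.hadamard C2 C2)ᵀ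
      - (2 : ℝ) • (C1 * T * C2ᵀ)) :
    (∑ x : Fin n1, ∑ x' : Fin n1, ∑ y : Fin n2, ∑ y' : Fin n2,
        (C1 x x' - C2 y y') ^ 2 * T x y * T x' y') =
      ∑ x : Fin n1, ∑ y : Fin n2, L x y * T x y := by
  subst hL
  simp only [Matrix.sub_apply, Matrix.add_apply, Matrix.smul_apply, smul_eq_mul,
    Matrix.mul_apply, Matrix.hadamard_apply, Matrix.transpose_apply, hones1, hones2,
    mul_one, one_mul]
  have swap : (∑ x : Fin n1, ∑ x' : Fin n1, ∑ y : Fin n2, ∑ y' : Fin n2,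
        (C1 x x' - C2 y y') ^ 2 * T x y * T x' y')
      = ∑ x : Fin n1, ∑ y : Fin n2, ∑ x' : Fin n1, ∑ y' : Fin n2,
        (C1 x x' - C2 y y') ^ 2 * T x y * T x' y' := by
    refine Finset.sum_congr rfl fun x _ => ?_
    exact Finset.sum_comm
  rw [swap]
  refine Finset.sum_congr rfl fun x _ => Finset.sum_congr rfl fun y _ => ?_
  have expand : ∀ x' y', (C1 x x' - C2 y y') ^ 2 * T x y * T x' y'
      = C1 x x' ^ 2 * T x' y' * T x y
        + C2 y y' ^ 2 * T x' y' * T x y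
        - 2 * (C1 x x' * T x' y' * C2 y y') * T x y := by intro x' y'; ring
  simp only [expand, Finset.sum_add_distrib, Finset.sum_sub_distrib,
    ← Finset.sum_mul, ← Finset.mul_sum]
  rw [Finset.sum_comm (f := fun x' y' => C2 y y' ^ 2 * T x' y')]
  simp only [← Finset.sum_mul, ← Finset.mul_sum]
  have h1 : (∑ k : Fin n1, C1 x k ^ 2 * ∑ j : Fin n2, T k j)
      = ∑ j : Fin n2, ∑ k : Fin n1, C1 x k * C1 x k * T k j := by
    rw [Finset.sum_comm]
    refine Finset.sum_congr rfl fun k _ => ?_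
    rw [Finset.mul_sum]
    exact Finset.sum_congr rfl fun j _ => by ring
  have h2 : (∑ j : Fin n2, C2 y j ^ 2 * ∑ i : Fin n1, T i j)
      = ∑ j : Fin n2, (∑ i : Fin n1, T i j) * (C2 y j * C2 y j) := by
    exact Finset.sum_congr rfl fun j _ => by ring
  have h3 : (∑ i : Fin n1, ∑ j : Fin n2, C1 x i * T i j * C2 y j)
      = ∑ j : Fin n2, (∑ i : Fin n1, C1 x i * T i j) * C2 y j := by
    rw [Finset.sum_comm]
    refine Finset.sum_congr rfl fun j _ => ?_
    rw [Finset.sum_mul]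
  rw [h1, h2, h3]
  ring
end
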